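/- Let k ≥ 2, let G be a graph, and let G' be obtained from G by attaching to every vertex of G a pendant path with ⌊(k−1)/2⌋ new vertices. Then ψ_k(G') equals the minimum cardinality of a vertex cover of G. -/

import Mathlib

open SimpleGraph

variable {V : Type*}

/-- `S` is a `k`-path vertex cover of `G`: every path on `k` vertices meets `S`. -/
def IsPathVC (G : SimpleGraph V) (k : ℕ) (S : Set V) : Prop :=
  ∀ ⦃u v : V⦄ (w : G.Walk u v), w.IsPath → w.length + 1 = k → ∃ x ∈ w.support, x ∈ S

/-- `psi G k` is the minimum cardinality of a `k`-path vertex cover of `G`. -/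
noncomputable def psi (G : SimpleGraph V) (k : ℕ) : ℕ :=
  sInf {n | ∃ S : Set V, IsPathVC G k S ∧ S.ncard = n}
/-- The minimum cardinality of a vertex cover of `G`. -/
noncomputable def minVC (G : SimpleGraph V) : ℕ :=
  sInf {n | ∃ S : Set V, (∀ ⦃u v : V⦄, G.Adj u v → u ∈ S ∨ v ∈ S) ∧ S.ncard = n}

/-- The graph obtained from `G` by attaching to each vertex `v` a pendant path
with `p` new vertices `(v,0), (v,1), …, (v,p-1)`, where `(v,0)` is joined to `v`. -/
def attachPaths (G : SimpleGraph V) (p : ℕ) : SimpleGraph (V ⊕ V × Fin p) :=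
  SimpleGraph.fromRel (fun a b =>
    match a, b with
    | Sum.inl u, Sum.inl v => G.Adj u v
    | Sum.inl u, Sum.inr (v, i) => u = v ∧ (i : ℕ) = 0
    | Sum.inr (u, i), Sum.inr (v, j) => u = v ∧ (j : ℕ) = (i : ℕ) + 1
    | _, _ => False)

section Aux

variable {p : ℕ}

/-- Base vertex of a vertex of the attached graph. -/
def pbase : V ⊕ V × Fin p → V := Sum.elim id Prod.fst

/-- Height of a vertex of the attached graph. -/
def pht : V ⊕ V × Fin p → ℕ := Sum.elim (fun _ => 0) (fun x => (x.2 : ℕ) + 1)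

lemma pbase_pht_inj {x y : V ⊕ V × Fin p} (hb : pbase x = pbase y)
    (hh : pht x = pht y) : x = y := by
  cases x with
  | inl u => cases y with
    | inl v => simp [pbase] at hb; rw [hb]
    | inr q => simp [pht] at hh
  | inr q => cases y with
    | inl v => simp [pht] at hh
    | inr q' =>
      obtain ⟨u, i⟩ := q; obtain ⟨v, j⟩ := q'
      simp [pbase, pht] at hb hh
      subst hb
      have : i = j := Fin.ext hh
      rw [this]

lemma pht_le (x : V ⊕ V × Fin p) : pht x ≤ p := by
  cases x with
  | inl u => simp [pht]
  | inr q => simp [pht]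

lemma attach_adj_cases {G : SimpleGraph V} {a b : V ⊕ V × Fin p}
    (h : (attachPaths G p).Adj a b) :
    (∃ u v, G.Adj u v ∧ a = Sum.inl u ∧ b = Sum.inl v) ∨ pbase a = pbase b := by
  rw [attachPaths, fromRel_adj] at h
  obtain ⟨-, h⟩ := h
  cases a with
  | inl u => cases b with
    | inl v =>
      rcases h with h | h
      · exact Or.inl ⟨u, v, h, rfl, rfl⟩
      · exact Or.inl ⟨u, v, h.symm, rfl, rfl⟩
    | inr q =>
      right
      rcases h with ⟨h, -⟩ | ⟨h, -⟩ <;> simp [pbase, h]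
  | inr q => cases b with
    | inl v =>
      right
      rcases h with ⟨h, -⟩ | ⟨h, -⟩ <;> simp [pbase, h]
    | inr q' =>
      right
      rcases h with ⟨h, -⟩ | ⟨h, -⟩ <;> simp [pbase, h]

lemma adj_inl_inl {G : SimpleGraph V} {u v : V} (h : G.Adj u v) :
    (attachPaths G p).Adj (Sum.inl u) (Sum.inl v) := by
  rw [attachPaths, fromRel_adj]
  exact ⟨by simp [h.ne], Or.inl h⟩

lemma adj_inl_inr0 {G : SimpleGraph V} {u : V} {i : Fin p} (h : (i : ℕ) = 0) :
    (attachPaths G p).Adj (Sum.inl u) (Sum.inr (u, i)) := by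
  rw [attachPaths, fromRel_adj]
  exact ⟨by simp, Or.inl ⟨rfl, h⟩⟩

lemma adj_inr_succ {G : SimpleGraph V} {u : V} {i j : Fin p} (h : (j : ℕ) = (i : ℕ) + 1) :
    (attachPaths G p).Adj (Sum.inr (u, i)) (Sum.inr (u, j)) := by
  rw [attachPaths, fromRel_adj]
  refine ⟨?_, Or.inl ⟨rfl, h⟩⟩
  simp only [ne_eq, Sum.inr.injEq, Prod.mk.injEq, true_and]
  intro hij
  rw [hij] at h; omega

lemma walk_cases {G : SimpleGraph V} {a b : V ⊕ V × Fin p}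
    (w : (attachPaths G p).Walk a b) :
    (∃ u v, G.Adj u v ∧ Sum.inl u ∈ w.support ∧ Sum.inl v ∈ w.support) ∨
    (∀ x ∈ w.support, pbase x = pbase a) := by
  induction w with
  | nil =>
    right; intro x hx
    rw [Walk.support_nil, List.mem_singleton] at hx
    rw [hx]
  | @cons a c b h w ih =>
    rcases attach_adj_cases h with ⟨u, v, huv, ha, hc⟩ | hb
    · left
      exact ⟨u, v, huv, by rw [← ha]; exact Walk.start_mem_support _,
        by rw [Walk.support_cons]; exact List.mem_cons_of_mem _ (hc ▸ w.start_mem_support)⟩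
    · rcases ih with ⟨u, v, huv, h1, h2⟩ | hall
      · left
        exact ⟨u, v, huv, by rw [Walk.support_cons]; exact List.mem_cons_of_mem _ h1,
          by rw [Walk.support_cons]; exact List.mem_cons_of_mem _ h2⟩
      · right; intro x hx
        rw [Walk.support_cons, List.mem_cons] at hx
        rcases hx with rfl | hx
        · rfl
        · rw [hall x hx, ← hb]

lemma walk_of_fn {W : Type*} {G : SimpleGraph W} (f : ℕ → W) :
    ∀ n, (∀ i, i < n → G.Adj (f i) (f (i + 1))) →
    ∃ w : G.Walk (f 0) (f n), w.length = n ∧ w.support = (List.range (n + 1)).map f := by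
  intro n
  induction n with
  | zero => intro _; exact ⟨Walk.nil, rfl, by rw [List.range_succ, List.range_zero]; simp⟩
  | succ n ih =>
    intro hadj
    obtain ⟨w, hl, hs⟩ := ih (fun i hi => hadj i (by omega))
    refine ⟨w.concat (hadj n (by omega)), ?_, ?_⟩
    · rw [Walk.length_concat, hl]
    · rw [Walk.support_concat, hs, List.range_succ (n := n + 1)]
      simp [List.concat_eq_append]

lemma exists_edge_path {G : SimpleGraph V} {k : ℕ} (hk : 2 ≤ k) {u v : V}
    (huv : G.Adj u v) :
    ∃ (s t : V ⊕ V × Fin ((k - 1) / 2))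
      (w : (attachPaths G ((k - 1) / 2)).Walk s t),
      w.IsPath ∧ w.length + 1 = k ∧ ∀ x ∈ w.support, pbase x = u ∨ pbase x = v := by
  classical
  set p := (k - 1) / 2 with hp
  have hpk : p + 2 ≤ k := by omega
  have hk2 : k ≤ 2 * p + 2 := by omega
  have hne : u ≠ v := huv.ne
  set f : ℕ → V ⊕ V × Fin p := fun t =>
    if h : t < p then Sum.inr (u, ⟨p - 1 - t, by omega⟩)
    else if t = p then Sum.inl u
    else if t = p + 1 then Sum.inl v
    else if h2 : t - p - 2 < p then Sum.inr (v, ⟨t - p - 2, h2⟩)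
    else Sum.inl v with hf
  set g : V ⊕ V × Fin p → ℕ := fun x =>
    match x with
    | Sum.inl w => if w = u then p else p + 1
    | Sum.inr (w, i) => if w = u then p - 1 - (i : ℕ) else p + 2 + (i : ℕ) with hg
  have hgf : ∀ t, t ≤ k - 1 → g (f t) = t := by
    intro t ht
    by_cases h1 : t < p
    · simp only [hf, hg, dif_pos h1]
      simp only [if_true]; omega
    · by_cases h2 : t = p
      · simp only [hf, hg, dif_neg h1, if_pos h2]
        simp only [if_true]; omega
      · by_cases h3 : t = p + 1
        · simp only [hf, hg, dif_neg h1, if_neg h2, if_pos h3]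
          rw [if_neg (Ne.symm hne)]; omega
        · have h4 : t - p - 2 < p := by omega
          simp only [hf, hg, dif_neg h1, if_neg h2, if_neg h3, dif_pos h4]
          rw [if_neg (Ne.symm hne)]; omega
  have hadj : ∀ i, i < k - 1 → (attachPaths G p).Adj (f i) (f (i + 1)) := by
    intro i hi
    by_cases h1 : i + 1 < p
    · have hi1 : i < p := by omega
      simp only [hf, dif_pos h1, dif_pos hi1]
      exact (adj_inr_succ (by simp; omega)).symm
    · by_cases h2 : i + 1 = p
      · have hi1 : i < p := by omega
        simp only [hf, dif_pos hi1, dif_neg (show ¬ i + 1 < p by omega), if_pos h2]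
        exact (adj_inl_inr0 (by simp; omega)).symm
      · by_cases h3 : i = p
        · simp only [hf, dif_neg (show ¬ i < p by omega), if_pos h3,
            dif_neg (show ¬ i + 1 < p by omega),
            if_neg (show ¬ i + 1 = p by omega), if_pos (show i + 1 = p + 1 by omega)]
          exact adj_inl_inl huv
        · by_cases h4 : i = p + 1
          · have h5 : i + 1 - p - 2 < p := by omega
            simp only [hf, dif_neg (show ¬ i < p by omega),
              if_neg (show ¬ i = p by omega), if_pos h4,
              dif_neg (show ¬ i + 1 < p by omega),
              if_neg (show ¬ i + 1 = p by omega),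
              if_neg (show ¬ i + 1 = p + 1 by omega), dif_pos h5]
            exact adj_inl_inr0 (by simp; omega)
          · have h5 : i - p - 2 < p := by omega
            have h6 : i + 1 - p - 2 < p := by omega
            simp only [hf, dif_neg (show ¬ i < p by omega),
              if_neg (show ¬ i = p by omega),
              if_neg (show ¬ i = p + 1 by omega), dif_pos h5,
              dif_neg (show ¬ i + 1 < p by omega),
              if_neg (show ¬ i + 1 = p by omega),
              if_neg (show ¬ i + 1 = p + 1 by omega), dif_pos h6]
            exact adj_inr_succ (by simp; omega)
  obtain ⟨w, hl, hs⟩ := walk_of_fn f (k - 1) hadj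
  refine ⟨f 0, f (k - 1), w, ?_, by omega, ?_⟩
  · rw [Walk.isPath_def, hs]
    refine List.Nodup.map_on ?_ List.nodup_range
    intro x hx y hy hfxy
    rw [List.mem_range] at hx hy
    have := hgf x (by omega)
    have := hgf y (by omega)
    rw [hfxy] at *
    omega
  · intro x hx
    rw [hs, List.mem_map] at hx
    obtain ⟨t, -, rfl⟩ := hx
    simp only [hf]
    split_ifs <;> simp [pbase]

end Aux

theorem psi_attach_eq_minVC [Fintype V] (G : SimpleGraph V) (k : ℕ) (hk : 2 ≤ k) :
    psi (attachPaths G ((k - 1) / 2)) k = minVC G := by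
  classical
  set p := (k - 1) / 2 with hp
  apply le_antisymm
  · -- psi ≤ minVC
    have hne : {n | ∃ S : Set V, (∀ ⦃u v : V⦄, G.Adj u v → u ∈ S ∨ v ∈ S) ∧
        S.ncard = n}.Nonempty :=
      ⟨(Set.univ : Set V).ncard, Set.univ, fun u v _ => Or.inl trivial, rfl⟩
    obtain ⟨S, hS, hcard⟩ := Nat.sInf_mem hne
    apply Nat.sInf_le
    refine ⟨Sum.inl '' S, ?_, by
      rw [Set.ncard_image_of_injective _ Sum.inl_injective]; exact hcard⟩
    intro a b w hw hlen
    rcases walk_cases w with ⟨x, y, hxy, h1, h2⟩ | hall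
    · rcases hS hxy with h | h
      · exact ⟨Sum.inl x, h1, ⟨x, h, rfl⟩⟩
      · exact ⟨Sum.inl y, h2, ⟨y, h, rfl⟩⟩
    · exfalso
      -- all vertices lie in one broom: at most p + 1 < k vertices
      have hnd : (w.support.map pht).Nodup := by
        refine List.Nodup.map_on ?_ (hw.support_nodup)
        intro x hx y hy hxy
        exact pbase_pht_inj (by rw [hall x hx, hall y hy]) hxy
      have hsub : (w.support.map pht).toFinset ⊆ Finset.range (p + 1) := by
        intro n hn
        rw [List.mem_toFinset, List.mem_map] at hn
        obtain ⟨x, -, rfl⟩ := hn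
        rw [Finset.mem_range]
        exact Nat.lt_succ_of_le (pht_le x)
      have hcard2 := Finset.card_le_card hsub
      rw [List.toFinset_card_of_nodup hnd, List.length_map,
        Walk.length_support, Finset.card_range] at hcard2
      omega
  · -- minVC ≤ psi
    have hne : {n | ∃ S : Set (V ⊕ V × Fin p),
        IsPathVC (attachPaths G p) k S ∧ S.ncard = n}.Nonempty :=
      ⟨(Set.univ : Set (V ⊕ V × Fin p)).ncard, Set.univ,
        fun a b w _ _ => ⟨a, w.start_mem_support, trivial⟩, rfl⟩
    obtain ⟨S', hS', hcard⟩ := Nat.sInf_mem hne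
    have hVC : ∀ ⦃u v : V⦄, G.Adj u v → u ∈ pbase '' S' ∨ v ∈ pbase '' S' := by
      intro u v huv
      obtain ⟨s, t, w, hw, hlen, hsup⟩ := exists_edge_path hk huv
      obtain ⟨x, hxsup, hxS⟩ := hS' w hw hlen
      rcases hsup x hxsup with h | h
      · exact Or.inl ⟨x, hxS, h⟩
      · exact Or.inr ⟨x, hxS, h⟩
    calc minVC G ≤ (pbase '' S').ncard := Nat.sInf_le ⟨pbase '' S', hVC, rfl⟩
      _ ≤ S'.ncard := Set.ncard_image_le (Set.toFinite S')
      _ = _ := hcard
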